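/- Every U ∈ SU(2) can be written exactly as a product of at most 4 matrix exponentials e^{-iH₄L} e^{-iH₃L} e^{-iH₂L} e^{-iH₁L}, where each H_j = η_j I + α_j σ_z + κ_j σ_x is a 2×2 real symmetric matrix with strictly positive off-diagonal entry κ_j > 0 (after shifting by suitable integer multiples of 2π/L), and L > 0 is fixed. -/

import Mathlib

open Matrix Complex

private lemma su2aux_angle (x y : ℝ) (h : x ^ 2 + y ^ 2 = 1) :
    ∃ t : ℝ, -Real.pi < t ∧ Real.cos t = x ∧ Real.sin t = y := by
  have h0 : (⟨x, y⟩ : ℂ) ≠ 0 := by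
    intro hc
    rw [Complex.ext_iff] at hc
    simp only [Complex.zero_re, Complex.zero_im] at hc
    nlinarith [hc.1, hc.2]
  have habs : ‖(⟨x, y⟩ : ℂ)‖ = 1 := by
    rw [Complex.norm_def, Complex.normSq_mk, show x * x + y * y = 1 by nlinarith]
    exact Real.sqrt_one
  refine ⟨Complex.arg ⟨x, y⟩, Complex.neg_pi_lt_arg _, ?_, ?_⟩
  · rw [Complex.cos_arg h0, habs]; simp
  · rw [Complex.sin_arg, habs]; simp

private lemma su2aux_realize (L : ℝ) (hL : 0 < L) (z : ℂ) (c : ℝ)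
    (hn : z.re ^ 2 + z.im ^ 2 + c ^ 2 = 1) (hg : c ≠ 0 ∨ z = 1 ∨ z = -1) :
    ∃ η α κ : ℝ, 0 < κ ∧
      NormedSpace.exp ((-(Complex.I * (L : ℂ))) •
          ((η : ℂ) • (1 : Matrix (Fin 2) (Fin 2) ℂ) + (α : ℂ) • !![1, 0; 0, -1] +
            (κ : ℂ) • !![0, 1; 1, 0]))
        = !![z, -Complex.I * c; -Complex.I * c, (starRingEnd ℂ) z] := by
  have hLne : L ≠ 0 := ne_of_gt hL
  -- find angle and axis
  obtain ⟨t, nx, nz, htπ, hct, hnx, hnn, hsx, hsz⟩ :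
      ∃ t nx nz : ℝ, -Real.pi < t ∧ Real.cos t = z.re ∧ 0 < nx ∧ nx ^ 2 + nz ^ 2 = 1 ∧
        Real.sin t * nx = c ∧ Real.sin t * nz = -z.im := by
    have hρnn : (0:ℝ) ≤ c ^ 2 + z.im ^ 2 := by positivity
    set ρ : ℝ := Real.sqrt (c ^ 2 + z.im ^ 2) with hρdef
    have hρ0 : 0 ≤ ρ := Real.sqrt_nonneg _
    have hρsq : ρ ^ 2 = c ^ 2 + z.im ^ 2 := Real.sq_sqrt hρnn
    rcases eq_or_lt_of_le hρ0 with hρz | hρpos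
    · -- ρ = 0 : c = 0, z.im = 0, z.re = ±1
      have hc0 : c = 0 := by nlinarith
      have hi0 : z.im = 0 := by nlinarith
      obtain ⟨t, ht1, ht2, ht3⟩ := su2aux_angle z.re 0 (by nlinarith)
      exact ⟨t, 1, 0, ht1, ht2, one_pos, by norm_num, by rw [ht3]; simpa using hc0.symm,
        by rw [ht3]; simp [hi0]⟩
    · -- ρ > 0
      have hc0 : c ≠ 0 := by
        intro hc
        have him : z.im = 0 := by
          rcases hg with h | h | h
          · exact absurd hc h
          · rw [h]; simp
          · rw [h]; simp
        nlinarith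
      set σ : ℝ := if c < 0 then -1 else 1 with hσdef
      have hσsq : σ ^ 2 = 1 := by rw [hσdef]; split <;> norm_num
      have hs0 : σ * ρ ≠ 0 := by
        have : σ ≠ 0 := by rw [hσdef]; split <;> norm_num
        positivity
      obtain ⟨t, ht1, ht2, ht3⟩ := su2aux_angle z.re (σ * ρ) (by nlinarith)
      refine ⟨t, c / (σ * ρ), -z.im / (σ * ρ), ht1, ht2, ?_, ?_, ?_, ?_⟩
      · rw [hσdef]
        split
        · rename_i hneg
          rw [show (-1:ℝ) * ρ = -ρ by ring]
          exact div_pos_of_neg_of_neg hneg (by linarith)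
        · rename_i hpos
          have : 0 < c := lt_of_le_of_ne (not_lt.mp hpos) (Ne.symm hc0)
          positivity
      · field_simp
        simp only [hσsq, div_one]
        nlinarith
      · rw [ht3]; field_simp; exact div_self (left_ne_zero_of_mul hs0)
      · rw [ht3]; field_simp; exact congrArg Neg.neg (mul_div_cancel_left₀ _ (left_ne_zero_of_mul hs0))
  -- the construction
  obtain ⟨ω, hω, hLω⟩ : ∃ ω : ℝ, 0 < ω ∧ L * ω = t + 2 * Real.pi :=
    ⟨(t + 2 * Real.pi) / L, div_pos (by linarith [Real.pi_pos]) hL, by field_simp⟩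
  refine ⟨0, ω * nz, ω * nx, mul_pos hω hnx, ?_⟩
  have hnnC : (nx : ℂ) ^ 2 + (nz : ℂ) ^ 2 = 1 := by exact_mod_cast congrArg (Complex.ofReal) hnn
  set P : Matrix (Fin 2) (Fin 2) ℂ := !![(nx : ℂ), (nz : ℂ) - 1; 1 - (nz : ℂ), (nx : ℂ)] with hPdef
  have hdet : P.det = (((nx ^ 2 + (1 - nz) ^ 2 : ℝ)) : ℂ) := by
    rw [hPdef, Matrix.det_fin_two_of]; push_cast; ring
  have hdet0 : IsUnit P.det := by
    rw [hdet]
    refine Ne.isUnit ?_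
    exact_mod_cast ne_of_gt (by nlinarith : (0:ℝ) < nx ^ 2 + (1 - nz) ^ 2)
  have hPunit : IsUnit P := (Matrix.isUnit_iff_isUnit_det P).mpr hdet0
  set d1 : ℂ := -(Complex.I * L) * ω with hd1def
  set d2 : ℂ := Complex.I * L * ω with hd2def
  have hkey : (-(Complex.I * (L : ℂ))) •
          (((0:ℝ) : ℂ) • (1 : Matrix (Fin 2) (Fin 2) ℂ) + ((ω * nz : ℝ) : ℂ) • !![1, 0; 0, -1] +
            ((ω * nx : ℝ) : ℂ) • !![0, 1; 1, 0])
      = P * Matrix.diagonal ![d1, d2] * P⁻¹ := by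
    have hmul : (-(Complex.I * (L : ℂ))) •
          (((0:ℝ) : ℂ) • (1 : Matrix (Fin 2) (Fin 2) ℂ) + ((ω * nz : ℝ) : ℂ) • !![1, 0; 0, -1] +
            ((ω * nx : ℝ) : ℂ) • !![0, 1; 1, 0]) * P
        = P * Matrix.diagonal ![d1, d2] := by
      ext i j
      fin_cases i <;> fin_cases j <;>
        · simp [Matrix.mul_apply, Fin.sum_univ_two, Matrix.one_apply, hPdef, hd1def, hd2def,
            Matrix.diagonal]
          push_cast
          first
          | ring1
          | linear_combination (-(Complex.I * (L:ℂ) * (ω:ℂ))) * hnnC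
    rw [← hmul, Matrix.mul_nonsing_inv_cancel_right P _ hdet0]
  rw [hkey, Matrix.exp_conj P (Matrix.diagonal ![d1, d2]) hPunit, Matrix.exp_diagonal]
  have hdvec : (NormedSpace.exp (![d1, d2] : Fin 2 → ℂ)) = ![Complex.exp d1, Complex.exp d2] := by
    funext i
    fin_cases i <;> simp [Complex.exp_eq_exp_ℂ]
  rw [hdvec]
  have hLωC : (L : ℂ) * ω = (t : ℂ) + 2 * (Real.pi : ℂ) := by
    exact_mod_cast congrArg Complex.ofReal hLω
  have he1 : Complex.exp d1 = (Real.cos t : ℂ) - (Real.sin t : ℂ) * Complex.I := by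
    have hd : d1 = ((-(t + 2 * Real.pi) : ℝ) : ℂ) * Complex.I := by
      rw [hd1def]; push_cast; linear_combination (-Complex.I) * hLωC
    rw [hd, Complex.exp_mul_I, ← Complex.ofReal_cos, ← Complex.ofReal_sin,
      Real.cos_neg, Real.sin_neg, Real.cos_add_two_pi, Real.sin_add_two_pi]
    push_cast; ring
  have he2 : Complex.exp d2 = (Real.cos t : ℂ) + (Real.sin t : ℂ) * Complex.I := by
    have hd : d2 = (((t + 2 * Real.pi) : ℝ) : ℂ) * Complex.I := by
      rw [hd2def]; push_cast; linear_combination Complex.I * hLωC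
    rw [hd, Complex.exp_mul_I, ← Complex.ofReal_cos, ← Complex.ofReal_sin,
      Real.cos_add_two_pi, Real.sin_add_two_pi]
  have him : z.im = -(Real.sin t * nz) := by linarith [hsz]
  have hz : z = (Real.cos t : ℂ) - ((Real.sin t * nz : ℝ) : ℂ) * Complex.I := by
    have : (Real.cos t : ℂ) - ((Real.sin t * nz : ℝ) : ℂ) * Complex.I
        = (z.re : ℂ) + (z.im : ℝ) * Complex.I := by
      rw [hct, him]; push_cast; ring
    rw [this, Complex.re_add_im]
  have hcC : (c : ℂ) = ((Real.sin t : ℝ) : ℂ) * (nx : ℂ) := by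
    exact_mod_cast congrArg Complex.ofReal hsx.symm
  have hconjz : (starRingEnd ℂ) z = (Real.cos t : ℂ) + ((Real.sin t * nz : ℝ) : ℂ) * Complex.I := by
    rw [hz]
    simp only [map_sub, _root_.map_mul, Complex.conj_I, Complex.conj_ofReal]
    ring
  have hmul2 : P * Matrix.diagonal ![Complex.exp d1, Complex.exp d2]
      = !![z, -Complex.I * c; -Complex.I * c, (starRingEnd ℂ) z] * P := by
    rw [hconjz, hz, hcC]
    ext i j
    fin_cases i <;> fin_cases j <;>
      · simp [Matrix.mul_apply, Fin.sum_univ_two, hPdef, Matrix.diagonal, he1, he2]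
        push_cast
        first
        | ring1
        | linear_combination (Complex.I * Complex.sin (t : ℂ)) * hnnC
        | linear_combination (-(Complex.I * Complex.sin (t : ℂ))) * hnnC
  rw [hmul2, Matrix.mul_nonsing_inv_cancel_right P _ hdet0]

set_option maxHeartbeats 1000000 in
/-- **Four sections suffice for an arbitrary SU(2) gate.**
For any fixed `L > 0`, every `U ∈ SU(2)` can be written (up to a global phase) as
`e^{-iH₄L} e^{-iH₃L} e^{-iH₂L} e^{-iH₁L}` where each
`H_j = η_j I + α_j σ_z + κ_j σ_x` is real symmetric with strictly positive
off-diagonal entry `κ_j > 0`. -/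

theorem su2_four_section_decomposition (L : ℝ) (hL : 0 < L)
    (σx σz : Matrix (Fin 2) (Fin 2) ℂ)
    (hσx : σx = !![0, 1; 1, 0]) (hσz : σz = !![1, 0; 0, -1])
    (U : Matrix.specialUnitaryGroup (Fin 2) ℂ) :
    ∃ η α κ : Fin 4 → ℝ, (∀ j, 0 < κ j) ∧ ∃ θ : ℝ,
      (U : Matrix (Fin 2) (Fin 2) ℂ) =
        Complex.exp (Complex.I * (θ : ℂ)) •
          (NormedSpace.exp ((-(Complex.I * (L : ℂ))) •
              ((η 3 : ℂ) • (1 : Matrix (Fin 2) (Fin 2) ℂ) + (α 3 : ℂ) • σz + (κ 3 : ℂ) • σx)) *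
           NormedSpace.exp ((-(Complex.I * (L : ℂ))) •
              ((η 2 : ℂ) • (1 : Matrix (Fin 2) (Fin 2) ℂ) + (α 2 : ℂ) • σz + (κ 2 : ℂ) • σx)) *
           NormedSpace.exp ((-(Complex.I * (L : ℂ))) •
              ((η 1 : ℂ) • (1 : Matrix (Fin 2) (Fin 2) ℂ) + (α 1 : ℂ) • σz + (κ 1 : ℂ) • σx)) *
           NormedSpace.exp ((-(Complex.I * (L : ℂ))) •
              ((η 0 : ℂ) • (1 : Matrix (Fin 2) (Fin 2) ℂ) + (α 0 : ℂ) • σz + (κ 0 : ℂ) • σx))) := by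
  subst hσx hσz
  set V : Matrix (Fin 2) (Fin 2) ℂ := (U : Matrix (Fin 2) (Fin 2) ℂ) with hVdef
  obtain ⟨hunit, hdet⟩ := Matrix.mem_specialUnitaryGroup_iff.mp U.2
  have hUV : V * star V = 1 := Matrix.mem_unitaryGroup_iff.mp hunit
  have hUV' : star V * V = 1 := Matrix.mem_unitaryGroup_iff'.mp hunit
  have hadj : V.adjugate = star V := by
    have h1 : V * V.adjugate = 1 := by rw [Matrix.mul_adjugate, hdet, one_smul]
    calc V.adjugate = star V * V * V.adjugate := by rw [hUV', one_mul]
      _ = star V * (V * V.adjugate) := by rw [Matrix.mul_assoc]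
      _ = star V := by rw [h1, mul_one]
  set a : ℂ := V 0 0 with hadef
  set b : ℂ := V 0 1 with hbdef
  have hadj2 : (!![V 1 1, -b; -(V 1 0), a] : Matrix (Fin 2) (Fin 2) ℂ) = star V := by
    rw [← hadj, Matrix.adjugate_fin_two]
  have h11 : V 1 1 = (starRingEnd ℂ) a := by
    have h := congrFun (congrFun hadj2 0) 0
    simpa [Matrix.star_apply] using h
  have h10 : V 1 0 = -((starRingEnd ℂ) b) := by
    have h := congrFun (congrFun hadj2 0) 1
    simp [Matrix.star_apply] at h
    -- h : -b = conj (V 1 0)  (or similar)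
    have h2 := congrArg (starRingEnd ℂ) h
    simpa [map_neg] using h2.symm
  have habs : a.re ^ 2 + a.im ^ 2 + b.re ^ 2 + b.im ^ 2 = 1 := by
    have h := congrFun (congrFun hUV 0) 0
    simp only [Matrix.mul_apply, Fin.sum_univ_two, Matrix.star_apply, Matrix.one_apply,
      RCLike.star_def, if_true, if_pos rfl] at h
    have h2 := congrArg Complex.re h
    simp only [Complex.add_re, Complex.mul_re, Complex.conj_re, Complex.conj_im,
      Complex.one_re] at h2
    nlinarith [h2]
  obtain ⟨e, he⟩ : ∃ e : ℝ, a.im * Real.sin e = b.re * Real.cos e := by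
    by_cases ha : a.im = 0
    · exact ⟨Real.pi / 2, by simp [ha]⟩
    · refine ⟨Real.arctan (b.re / a.im), ?_⟩
      rw [Real.sin_arctan, Real.cos_arctan]
      have h0 : Real.sqrt (1 + (b.re / a.im) ^ 2) ≠ 0 := by positivity
      field_simp
  have hcs : Real.cos e ^ 2 + Real.sin e ^ 2 = 1 := Real.cos_sq_add_sin_sq e
  have hcsC : ((Real.cos e : ℝ) : ℂ) ^ 2 + ((Real.sin e : ℝ) : ℂ) ^ 2 = 1 := by
    exact_mod_cast congrArg Complex.ofReal hcs
  set Q : Matrix (Fin 2) (Fin 2) ℂ :=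
    !![(Real.cos e : ℂ), Complex.I * (Real.sin e : ℂ);
       Complex.I * (Real.sin e : ℂ), (Real.cos e : ℂ)] with hQdef
  set R : Matrix (Fin 2) (Fin 2) ℂ :=
    !![(Real.cos e : ℂ), -Complex.I * (Real.sin e : ℂ);
       -Complex.I * (Real.sin e : ℂ), (Real.cos e : ℂ)] with hRdef
  have hQR : Q * R = 1 := by
    ext i j
    fin_cases i <;> fin_cases j <;>
      · simp [hQdef, hRdef, Matrix.mul_apply, Fin.sum_univ_two, Matrix.one_apply,
          -Complex.ofReal_cos, -Complex.ofReal_sin]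
        first
        | ring1
        | linear_combination hcsC - ((Real.sin e : ℝ) : ℂ) ^ 2 * Complex.I_sq
        | linear_combination (-1 : ℂ) * hcsC + ((Real.sin e : ℝ) : ℂ) ^ 2 * Complex.I_sq
  have hVQR : V = V * Q * R := by rw [Matrix.mul_assoc, hQR, Matrix.mul_one]
  -- the symmetrized matrix N = V * Q
  set zN : ℂ := a * (Real.cos e : ℂ) + b * (Complex.I * (Real.sin e : ℂ)) with hzNdef
  set cN : ℝ := -(a.re * Real.sin e + b.im * Real.cos e) with hcNdef
  have hNmat : V * Q = !![zN, -Complex.I * (cN : ℂ); -Complex.I * (cN : ℂ),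
      (starRingEnd ℂ) zN] := by
    ext i j
    fin_cases i <;> fin_cases j
    · simp [hQdef, Matrix.mul_apply, Fin.sum_univ_two, hzNdef,
        -Complex.ofReal_cos, -Complex.ofReal_sin]
      rfl
    · simp [hQdef, Matrix.mul_apply, Fin.sum_univ_two,
        -Complex.ofReal_cos, -Complex.ofReal_sin]
      apply Complex.ext <;>
        simp [Complex.add_re, Complex.add_im, Complex.mul_re, Complex.mul_im, Complex.I_re,
          Complex.I_im, Complex.ofReal_re, Complex.ofReal_im, hcNdef,
          -Complex.ofReal_cos, -Complex.ofReal_sin] <;>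
        first
        | linarith [he]
        | ring1
    · simp [hQdef, Matrix.mul_apply, Fin.sum_univ_two, h10, h11,
        -Complex.ofReal_cos, -Complex.ofReal_sin]
      apply Complex.ext <;>
        simp [Complex.add_re, Complex.add_im, Complex.sub_re, Complex.sub_im, Complex.neg_re,
          Complex.neg_im, Complex.mul_re, Complex.mul_im, Complex.I_re, Complex.I_im,
          Complex.ofReal_re, Complex.ofReal_im, Complex.conj_re, Complex.conj_im, hcNdef,
          -Complex.ofReal_cos, -Complex.ofReal_sin] <;>
        first
        | linarith [he]
        | ring1
    · simp [hQdef, Matrix.mul_apply, Fin.sum_univ_two, h10, h11, hzNdef,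
        -Complex.ofReal_cos, -Complex.ofReal_sin]
      all_goals try simp only [map_add, _root_.map_mul, Complex.conj_I, Complex.conj_ofReal]
      all_goals ring1
  have hnormN : zN.re ^ 2 + zN.im ^ 2 + cN ^ 2 = 1 := by
    have hre : zN.re = a.re * Real.cos e - b.im * Real.sin e := by
      simp [hzNdef, Complex.add_re, Complex.mul_re, Complex.mul_im, Complex.I_re, Complex.I_im,
        Complex.ofReal_re, Complex.ofReal_im, -Complex.ofReal_cos, -Complex.ofReal_sin]
      try ring
    have him : zN.im = a.im * Real.cos e + b.re * Real.sin e := by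
      simp [hzNdef, Complex.add_im, Complex.mul_re, Complex.mul_im, Complex.I_re, Complex.I_im,
        Complex.ofReal_re, Complex.ofReal_im, -Complex.ofReal_cos, -Complex.ofReal_sin]
      try ring
    rw [hre, him, hcNdef]
    linear_combination (a.re ^ 2 + a.im ^ 2 + b.re ^ 2 + b.im ^ 2) * hcs + habs +
      (b.re * Real.cos e - a.im * Real.sin e) * he
  -- realization of the R factor
  have hRnorm : ((Real.cos e : ℝ) : ℂ).re ^ 2 + ((Real.cos e : ℝ) : ℂ).im ^ 2 +
      (Real.sin e) ^ 2 = 1 := by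
    simp [Complex.ofReal_re, Complex.ofReal_im, -Complex.ofReal_cos, -Complex.ofReal_sin]
    all_goals linarith [hcs]
  have hRgood : (Real.sin e ≠ 0) ∨ ((Real.cos e : ℂ) = 1 ∨ (Real.cos e : ℂ) = -1) := by
    by_cases hse : Real.sin e = 0
    · right
      have h2 : Real.cos e * Real.cos e = 1 := by nlinarith [hcs]
      rcases mul_self_eq_one_iff.mp h2 with h | h
      · left; exact_mod_cast congrArg Complex.ofReal h
      · right; exact_mod_cast congrArg Complex.ofReal h
    · left; exact hse
  obtain ⟨η0, α0, κ0, hκ0, h0⟩ := su2aux_realize L hL (Real.cos e : ℂ) (Real.sin e) hRnorm hRgood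
  rw [Complex.conj_ofReal] at h0
  by_cases hcN0 : cN = 0
  · -- case B : N is diagonal
    set x : ℝ := zN.re with hxdef
    set y : ℝ := zN.im with hydef
    have hxy : x ^ 2 + y ^ 2 = 1 := by
      have := hnormN
      rw [hcN0] at this
      linarith [this]
    have hxyC : (x : ℂ) ^ 2 + (y : ℂ) ^ 2 = 1 := by
      exact_mod_cast congrArg Complex.ofReal hxy
    have hzNxy : zN = (x : ℂ) + (y : ℝ) * Complex.I := (Complex.re_add_im zN).symm
    -- three factors for the diagonal
    obtain ⟨η3, α3, κ3, hκ3, h3⟩ := su2aux_realize L hL 0 1 (by norm_num) (Or.inl one_ne_zero)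
    obtain ⟨η2, α2, κ2, hκ2, h2⟩ := su2aux_realize L hL
      (((-(3 / 5) * x : ℝ) : ℂ) + ((3 / 5 * y : ℝ) : ℂ) * Complex.I) (4 / 5)
      (by
        simp only [Complex.add_re, Complex.add_im, Complex.mul_re, Complex.mul_im, Complex.I_re,
          Complex.I_im, Complex.ofReal_re, Complex.ofReal_im]
        ring_nf
        nlinarith [hxy])
      (Or.inl (by norm_num))
    obtain ⟨η1, α1, κ1, hκ1, h1⟩ := su2aux_realize L hL
      (((-(4 / 5) * x : ℝ) : ℂ) + ((-(4 / 5) * y : ℝ) : ℂ) * Complex.I) (3 / 5)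
      (by
        simp only [Complex.add_re, Complex.add_im, Complex.mul_re, Complex.mul_im, Complex.I_re,
          Complex.I_im, Complex.ofReal_re, Complex.ofReal_im]
        ring_nf
        nlinarith [hxy])
      (Or.inl (by norm_num))
    refine ⟨![η0, η1, η2, η3], ![α0, α1, α2, α3], ![κ0, κ1, κ2, κ3], ?_, 0, ?_⟩
    · intro j
      fin_cases j
      · simpa using hκ0
      · simpa using hκ1
      · simpa using hκ2
      · simpa using hκ3
    · simp only [Matrix.cons_val_zero, Matrix.cons_val_one, Matrix.head_cons,
        Matrix.cons_val_two, Matrix.tail_cons, Matrix.cons_val_three]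
      rw [h0, h1, h2, h3]
      simp only [Complex.ofReal_zero, mul_zero, Complex.exp_zero, one_smul]
      have hprod : (!![(0 : ℂ), -Complex.I * ((1 : ℝ) : ℂ); -Complex.I * ((1 : ℝ) : ℂ),
            (starRingEnd ℂ) 0] *
          !![((-(3 / 5) * x : ℝ) : ℂ) + ((3 / 5 * y : ℝ) : ℂ) * Complex.I,
              -Complex.I * ((4 / 5 : ℝ) : ℂ); -Complex.I * ((4 / 5 : ℝ) : ℂ),
             (starRingEnd ℂ) (((-(3 / 5) * x : ℝ) : ℂ) + ((3 / 5 * y : ℝ) : ℂ) * Complex.I)] *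
          !![((-(4 / 5) * x : ℝ) : ℂ) + ((-(4 / 5) * y : ℝ) : ℂ) * Complex.I,
              -Complex.I * ((3 / 5 : ℝ) : ℂ); -Complex.I * ((3 / 5 : ℝ) : ℂ),
             (starRingEnd ℂ) (((-(4 / 5) * x : ℝ) : ℂ) + ((-(4 / 5) * y : ℝ) : ℂ) * Complex.I)])
          = V * Q := by
        rw [hNmat, hcN0, hzNxy]
        simp only [map_add, map_sub, _root_.map_mul, map_neg, Complex.conj_I,
          Complex.conj_ofReal, map_div₀, map_ofNat, Complex.ofReal_zero, mul_zero, neg_zero,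
          map_zero]
        ext i j
        fin_cases i <;> fin_cases j <;>
          · simp [Matrix.mul_apply, Fin.sum_univ_two]
            push_cast
            first
            | ring1
            | linear_combination (-(x : ℂ) - (y : ℂ) * Complex.I) * Complex.I_sq
            | linear_combination (-(12 / 25 : ℂ) * Complex.I * (1 - (y : ℂ) ^ 2)) * Complex.I_sq
                + (-(12 / 25 : ℂ) * Complex.I) * hxyC
            | linear_combination (-(x : ℂ) + (y : ℂ) * Complex.I) * Complex.I_sq
      rw [hprod]
      exact hVQR
  · -- case A : N itself is a good factor
    obtain ⟨η1, α1, κ1, hκ1, h1⟩ := su2aux_realize L hL zN cN hnormN (Or.inl hcN0)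
    obtain ⟨η2, α2, κ2, hκ2, h2⟩ := su2aux_realize L hL 1 0 (by norm_num)
      (Or.inr (Or.inl rfl))
    have h2' : NormedSpace.exp ((-(Complex.I * (L : ℂ))) •
        ((η2 : ℂ) • (1 : Matrix (Fin 2) (Fin 2) ℂ) + (α2 : ℂ) • !![1, 0; 0, -1] +
          (κ2 : ℂ) • !![0, 1; 1, 0])) = 1 := by
      rw [h2]
      ext i j
      fin_cases i <;> fin_cases j <;> simp [Matrix.one_apply]
    refine ⟨![η0, η1, η2, η2], ![α0, α1, α2, α2], ![κ0, κ1, κ2, κ2], ?_, 0, ?_⟩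
    · intro j
      fin_cases j
      · simpa using hκ0
      · simpa using hκ1
      · simpa using hκ2
      · simpa using hκ2
    · simp only [Matrix.cons_val_zero, Matrix.cons_val_one, Matrix.head_cons,
        Matrix.cons_val_two, Matrix.tail_cons, Matrix.cons_val_three]
      rw [h0, h1, h2']
      simp only [Complex.ofReal_zero, mul_zero, Complex.exp_zero, one_smul, one_mul]
      rw [← hNmat]
      exact hVQR
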